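/- arXiv:1501.07193 — 3 statements merged into one kernel-verified Lean document; each statement's English description precedes it below -/
import Mathlib

section
/- Let τ be an M-topology on M : X → ℕ and let A, B : X → ℕ be sub-M-sets of M. Then ext(A ∪ B) = ext(A) ∩ ext(B), i.e., for every x ∈ X, ext(A ∪ B)(x) = min(ext(A)(x), ext(B)(x)). -/
/-- M-complement of a sub-M-set: `Aᶜ = M ⊖ A` (pointwise truncated subtraction). -/
def mcompl {X : Type*} (M A : X → ℕ) : X → ℕ := fun x => M x - A x

/-- `τ` is an M-topology on the multiset `M : X → ℕ`. -/
structure IsMTopology {X : Type*} (M : X → ℕ) (τ : Set (X → ℕ)) : Prop where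
  le_of_mem : ∀ N ∈ τ, N ≤ M
  top_mem : M ∈ τ
  zero_mem : (0 : X → ℕ) ∈ τ
  sSup_mem : ∀ S ⊆ τ, (fun x => sSup {n | ∃ N ∈ S, N x = n}) ∈ τ
  min_mem : ∀ U ∈ τ, ∀ V ∈ τ, (fun x => min (U x) (V x)) ∈ τ

/-- Interior: pointwise supremum of all open `G ∈ τ` with `G ≤ A`. -/
noncomputable def mint {X : Type*} (τ : Set (X → ℕ)) (A : X → ℕ) : X → ℕ :=
  fun x => sSup {n | ∃ G ∈ τ, G ≤ A ∧ G x = n}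

/-- Closure: pointwise infimum of all closed `K` with `A ≤ K ≤ M`. -/
noncomputable def mcl {X : Type*} (M : X → ℕ) (τ : Set (X → ℕ)) (A : X → ℕ) : X → ℕ :=
  fun x => sInf {n | ∃ K, mcompl M K ∈ τ ∧ A ≤ K ∧ K ≤ M ∧ K x = n}

/-- Exterior: interior of the M-complement. -/
noncomputable def mext {X : Type*} (M : X → ℕ) (τ : Set (X → ℕ)) (A : X → ℕ) : X → ℕ :=
  mint τ (mcompl M A)

/-- Boundary: `bd(A) = cl(A) ∩ cl(Aᶜ)` (pointwise min). -/
noncomputable def mbd {X : Type*} (M : X → ℕ) (τ : Set (X → ℕ)) (A : X → ℕ) : X → ℕ :=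
  fun x => min (mcl M τ A x) (mcl M τ (mcompl M A) x)


section Aux
variable {X : Type*} (M : X → ℕ) (τ : Set (X → ℕ))

lemma mint_nonempty (A : X → ℕ) (hτ : IsMTopology M τ) (x : X) :
    {n | ∃ G ∈ τ, G ≤ A ∧ G x = n}.Nonempty :=
  ⟨0, (0 : X → ℕ), hτ.zero_mem, fun y => Nat.zero_le _, rfl⟩

lemma mint_bdd (A : X → ℕ) (x : X) :
    BddAbove {n | ∃ G ∈ τ, G ≤ A ∧ G x = n} := by
  refine ⟨A x, ?_⟩
  rintro n ⟨G, _, hGA, rfl⟩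
  exact hGA x

lemma mint_le (A : X → ℕ) (hτ : IsMTopology M τ) : mint τ A ≤ A := by
  intro x
  refine csSup_le (mint_nonempty M τ A hτ x) ?_
  rintro n ⟨G, _, hGA, rfl⟩
  exact hGA x

lemma le_mint (A G : X → ℕ) (hG : G ∈ τ) (hGA : G ≤ A) : G ≤ mint τ A := by
  intro x
  exact le_csSup (mint_bdd τ A x) ⟨G, hG, hGA, rfl⟩

lemma mint_mono (A B : X → ℕ) (hτ : IsMTopology M τ) (h : A ≤ B) :
    mint τ A ≤ mint τ B := by
  intro x
  refine csSup_le (mint_nonempty M τ A hτ x) ?_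
  rintro n ⟨G, hG, hGA, rfl⟩
  exact le_csSup (mint_bdd τ B x) ⟨G, hG, le_trans hGA h, rfl⟩

lemma mint_mem (A : X → ℕ) (hτ : IsMTopology M τ) : mint τ A ∈ τ := by
  have h := hτ.sSup_mem {G | G ∈ τ ∧ G ≤ A} (fun G hG => hG.1)
  have he : (fun x => sSup {n | ∃ N ∈ {G | G ∈ τ ∧ G ≤ A}, N x = n}) = mint τ A := by
    funext x
    congr 1
    ext n
    constructor
    · rintro ⟨G, ⟨hG, hGA⟩, rfl⟩; exact ⟨G, hG, hGA, rfl⟩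
    · rintro ⟨G, hG, hGA, rfl⟩; exact ⟨G, ⟨hG, hGA⟩, rfl⟩
  rwa [he] at h

end Aux

theorem ext_union {X : Type*} (M : X → ℕ) (τ : Set (X → ℕ)) (hτ : IsMTopology M τ)
    (A B : X → ℕ) (hA : A ≤ M) (hB : B ≤ M) :
    ∀ x, mext M τ (fun y => max (A y) (B y)) x = min (mext M τ A x) (mext M τ B x) := by
  intro x
  have hC : mcompl M (fun y => max (A y) (B y)) =
      fun y => min (mcompl M A y) (mcompl M B y) := by
    funext y
    have := hA y
    have := hB y
    simp only [mcompl]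
    omega
  have hIA := mint_mem M τ (mcompl M A) hτ
  have hIB := mint_mem M τ (mcompl M B) hτ
  have hG : (fun y => min (mint τ (mcompl M A) y) (mint τ (mcompl M B) y)) ∈ τ :=
    hτ.min_mem _ hIA _ hIB
  have hGle : (fun y => min (mint τ (mcompl M A) y) (mint τ (mcompl M B) y)) ≤
      fun y => min (mcompl M A y) (mcompl M B y) := by
    intro y
    exact min_le_min (mint_le M τ (mcompl M A) hτ y) (mint_le M τ (mcompl M B) hτ y)
  simp only [mext, hC]
  apply le_antisymm
  · refine le_min ?_ ?_
    · exact mint_mono M τ _ _ hτ (fun y => min_le_left _ _) x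
    · exact mint_mono M τ _ _ hτ (fun y => min_le_right _ _) x
  · exact le_mint τ _ _ hG hGle x
end

section
/- Let τ be an M-topology on M : X → ℕ and let A, B : X → ℕ be sub-M-sets of M. Then bd(A ∪ B) ≤ bd(A) ∪ bd(B), i.e., for every x ∈ X, bd(A ∪ B)(x) ≤ max(bd(A)(x), bd(B)(x)). -/
/-- The defining set of the closure is nonempty when `A ≤ M`. -/
lemma mcl_set_nonempty {X : Type*} (M : X → ℕ) (τ : Set (X → ℕ)) (hτ : IsMTopology M τ)
    (A : X → ℕ) (hA : A ≤ M) (x : X) :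
    {n | ∃ K, mcompl M K ∈ τ ∧ A ≤ K ∧ K ≤ M ∧ K x = n}.Nonempty := by
  refine ⟨M x, M, ?_, hA, le_refl _, rfl⟩
  have : mcompl M M = (0 : X → ℕ) := by
    funext y; simp [mcompl]
  rw [this]; exact hτ.zero_mem

/-- There is a closed set achieving the closure value at `x`. -/
lemma mcl_witness {X : Type*} (M : X → ℕ) (τ : Set (X → ℕ)) (hτ : IsMTopology M τ)
    (A : X → ℕ) (hA : A ≤ M) (x : X) :
    ∃ K, mcompl M K ∈ τ ∧ A ≤ K ∧ K ≤ M ∧ K x = mcl M τ A x := by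
  have h := Nat.sInf_mem (mcl_set_nonempty M τ hτ A hA x)
  exact h

lemma mcl_le {X : Type*} (M : X → ℕ) (τ : Set (X → ℕ)) (A K : X → ℕ)
    (hK : mcompl M K ∈ τ) (hAK : A ≤ K) (hKM : K ≤ M) (x : X) :
    mcl M τ A x ≤ K x :=
  Nat.sInf_le ⟨K, hK, hAK, hKM, rfl⟩

theorem bd_union_le {X : Type*} (M : X → ℕ) (τ : Set (X → ℕ)) (hτ : IsMTopology M τ)
    (A B : X → ℕ) (hA : A ≤ M) (hB : B ≤ M) :
    ∀ x, mbd M τ (fun y => max (A y) (B y)) x ≤ max (mbd M τ A x) (mbd M τ B x) := by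
  intro x
  set C : X → ℕ := fun y => max (A y) (B y) with hC
  have hCM : C ≤ M := fun y => max_le (hA y) (hB y)
  -- witnesses for cl A, cl B, cl Aᶜ, cl Bᶜ at x
  obtain ⟨KA, hKAc, hAKA, hKAM, hKAx⟩ := mcl_witness M τ hτ A hA x
  obtain ⟨KB, hKBc, hBKB, hKBM, hKBx⟩ := mcl_witness M τ hτ B hB x
  obtain ⟨LA, hLAc, hLA1, hLAM, hLAx⟩ :=
    mcl_witness M τ hτ (mcompl M A) (fun y => Nat.sub_le _ _) x
  obtain ⟨LB, hLBc, hLB1, hLBM, hLBx⟩ :=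
    mcl_witness M τ hτ (mcompl M B) (fun y => Nat.sub_le _ _) x
  -- cl(A∪B) x ≤ max (cl A x) (cl B x)
  have h1 : mcl M τ C x ≤ max (mcl M τ A x) (mcl M τ B x) := by
    have hKc : mcompl M (fun y => max (KA y) (KB y)) ∈ τ := by
      have : mcompl M (fun y => max (KA y) (KB y))
          = fun y => min (mcompl M KA y) (mcompl M KB y) := by
        funext y
        have := hKAM y; have := hKBM y
        simp only [mcompl]
        omega
      rw [this]
      exact hτ.min_mem _ hKAc _ hKBc
    have := mcl_le M τ C (fun y => max (KA y) (KB y)) hKc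
      (fun y => max_le_max (hAKA y) (hBKB y))
      (fun y => max_le (hKAM y) (hKBM y)) x
    simpa [hKAx, hKBx] using this
  -- cl(Cᶜ) x ≤ cl(Aᶜ) x and ≤ cl(Bᶜ) x
  have hCcA : mcompl M C ≤ mcompl M A := fun y => by
    simp only [mcompl, hC]; omega
  have hCcB : mcompl M C ≤ mcompl M B := fun y => by
    simp only [mcompl, hC]; omega
  have h2 : mcl M τ (mcompl M C) x ≤ mcl M τ (mcompl M A) x := by
    have := mcl_le M τ (mcompl M C) LA hLAc (le_trans hCcA hLA1) hLAM x
    omega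
  have h3 : mcl M τ (mcompl M C) x ≤ mcl M τ (mcompl M B) x := by
    have := mcl_le M τ (mcompl M C) LB hLBc (le_trans hCcB hLB1) hLBM x
    omega
  simp only [mbd] at *
  omega
end

section
/- Let τ be an M-topology on M : X → ℕ and let A : X → ℕ be a sub-M-set of M. Then bd(bd(A)) ≤ bd(A) pointwise, i.e., bd(bd(A))(x) ≤ bd(A)(x) for every x ∈ X. -/
lemma mcompl_M_mem {X : Type*} {M : X → ℕ} {τ : Set (X → ℕ)} (hτ : IsMTopology M τ) :
    mcompl M M ∈ τ := by
  have : mcompl M M = 0 := funext fun x => by simp [mcompl]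
  rw [this]; exact hτ.zero_mem

lemma mcl_le_M {X : Type*} {M : X → ℕ} {τ : Set (X → ℕ)} (hτ : IsMTopology M τ)
    {A : X → ℕ} (hA : A ≤ M) : mcl M τ A ≤ M := fun x =>
  Nat.sInf_le ⟨M, mcompl_M_mem hτ, hA, le_refl M, rfl⟩

lemma mcl_le_self_of_closed {X : Type*} {M : X → ℕ} {τ : Set (X → ℕ)}
    {K : X → ℕ} (hK : mcompl M K ∈ τ) (hKM : K ≤ M) : mcl M τ K ≤ K := fun x =>
  Nat.sInf_le ⟨K, hK, le_refl K, hKM, rfl⟩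

lemma mcl_closed {X : Type*} {M : X → ℕ} {τ : Set (X → ℕ)} (hτ : IsMTopology M τ)
    {A : X → ℕ} (hA : A ≤ M) : mcompl M (mcl M τ A) ∈ τ := by
  set S : Set (X → ℕ) :=
    {N | ∃ K, mcompl M K ∈ τ ∧ A ≤ K ∧ K ≤ M ∧ N = mcompl M K} with hS
  have hSτ : S ⊆ τ := by rintro N ⟨K, hK, _, _, rfl⟩; exact hK
  have hmem := hτ.sSup_mem S hSτ
  have heq : (fun x => sSup {n | ∃ N ∈ S, N x = n}) = mcompl M (mcl M τ A) := by
    funext x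
    have hne : ∃ n, n ∈ {n | ∃ K, mcompl M K ∈ τ ∧ A ≤ K ∧ K ≤ M ∧ K x = n} :=
      ⟨M x, M, mcompl_M_mem hτ, hA, le_refl M, rfl⟩
    obtain ⟨K0, hK0, hAK0, hK0M, hK0x⟩ := Nat.sInf_mem hne
    apply le_antisymm
    · apply csSup_le
      · exact ⟨M x - K0 x, mcompl M K0, ⟨K0, hK0, hAK0, hK0M, rfl⟩, rfl⟩
      · rintro n ⟨N, ⟨K, hK, hAK, hKM, rfl⟩, rfl⟩
        have hle : sInf {n | ∃ K, mcompl M K ∈ τ ∧ A ≤ K ∧ K ≤ M ∧ K x = n} ≤ K x :=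
          Nat.sInf_le ⟨K, hK, hAK, hKM, rfl⟩
        simp only [mcompl, mcl]
        exact tsub_le_tsub_left hle (M x)
    · have : mcompl M (mcl M τ A) x = M x - K0 x := by
        simp only [mcompl, mcl, hK0x]
      rw [this]
      apply le_csSup
      · refine ⟨M x, ?_⟩
        rintro n ⟨N, ⟨K, hK, hAK, hKM, rfl⟩, rfl⟩
        exact Nat.sub_le _ _
      · exact ⟨mcompl M K0, ⟨K0, hK0, hAK0, hK0M, rfl⟩, rfl⟩
  rw [← heq]; exact hmem

lemma mbd_closed {X : Type*} {M : X → ℕ} {τ : Set (X → ℕ)} (hτ : IsMTopology M τ)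
    {A : X → ℕ} (hA : A ≤ M) : mcompl M (mbd M τ A) ∈ τ := by
  have hAc : mcompl M A ≤ M := fun x => Nat.sub_le _ _
  have hU := mcl_closed hτ hA
  have hV := mcl_closed hτ hAc
  set U := mcompl M (mcl M τ A)
  set V := mcompl M (mcl M τ (mcompl M A))
  have hSτ : ({U, V} : Set (X → ℕ)) ⊆ τ := by
    rintro N (rfl | rfl) <;> assumption
  have hmem := hτ.sSup_mem _ hSτ
  have heq : (fun x => sSup {n | ∃ N ∈ ({U, V} : Set (X → ℕ)), N x = n})
      = mcompl M (mbd M τ A) := by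
    funext x
    have h1 : {n | ∃ N ∈ ({U, V} : Set (X → ℕ)), N x = n} = {U x, V x} := by
      ext n
      constructor
      · rintro ⟨N, (rfl | rfl), rfl⟩
        · exact Or.inl rfl
        · exact Or.inr rfl
      · rintro (rfl | rfl)
        · exact ⟨U, Or.inl rfl, rfl⟩
        · exact ⟨V, Or.inr rfl, rfl⟩
    rw [h1, csSup_pair]
    have hcl : mcl M τ A x ≤ M x := mcl_le_M hτ hA x
    have hcl' : mcl M τ (mcompl M A) x ≤ M x := mcl_le_M hτ hAc x
    simp only [U, V, mcompl, mbd]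
    omega
  rw [← heq]; exact hmem

theorem bd_bd_le_bd {X : Type*} (M : X → ℕ) (τ : Set (X → ℕ))
    (hτ : IsMTopology M τ) (A : X → ℕ) (hA : A ≤ M) :
    ∀ x, mbd M τ (mbd M τ A) x ≤ mbd M τ A x := by
  intro x
  have hAc : mcompl M A ≤ M := fun x => Nat.sub_le _ _
  have hbdM : mbd M τ A ≤ M := fun x =>
    le_trans (min_le_left _ _) (mcl_le_M hτ hA x)
  have hclosed := mbd_closed hτ hA
  calc mbd M τ (mbd M τ A) x ≤ mcl M τ (mbd M τ A) x := min_le_left _ _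
    _ ≤ mbd M τ A x := mcl_le_self_of_closed hclosed hbdM x
end
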